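/- Let D be a finite distributive lattice, realized by Birkhoff's theorem as the lattice of down-sets of a finite poset P with elements a₁,...,a_n, and identify D with a sublattice of {0,1}ⁿ via indicator vectors. Then a function f : D → ℝ ∪ {∞} is submodular if and only if its Lovász extension (piecewise-linear interpolation over the standard simplicial subdivision of the order polytope {x ∈ [0,1]ⁿ : x_i ≥ x_j whenever a_i ≺ a_j} into simplices with vertex chains 0 ⊆ e_{i₁} ⊆ e_{i₁}+e_{i₂} ⊆ ⋯ corresponding to maximal chains of D) is convex on the order polytope. -/

import Mathlib

open scoped Classical

/-- `S` is a down-set (lower set) of the poset `(Fin n, prec)`. -/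
def IsDownSet {n : ℕ} (prec : Fin n → Fin n → Prop) (S : Finset (Fin n)) : Prop :=
  ∀ i j : Fin n, prec i j → j ∈ S → i ∈ S

/-- Membership in the order polytope `{x ∈ [0,1]ⁿ : a_i ≺ a_j → x_i ≥ x_j}`. -/
def InOrderPolytope {n : ℕ} (prec : Fin n → Fin n → Prop) (x : Fin n → ℝ) : Prop :=
  (∀ i, 0 ≤ x i ∧ x i ≤ 1) ∧ ∀ i j : Fin n, prec i j → x j ≤ x i

/-- The threshold set `{i : x_i > t}` of `x` at level `t`; for `x` in the order polytope
this is a down-set. -/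
noncomputable def threshF {n : ℕ} (x : Fin n → ℝ) (t : ℝ) : Finset (Fin n) :=
  Finset.univ.filter fun i => t < x i

/-- The barycentric weight of the vertex (indicator vector of) `S` in the chain
decomposition of `x`: the measure of the levels `t ∈ (0,1]` with threshold set `S`. -/
noncomputable def weightF {n : ℕ} (x : Fin n → ℝ) (S : Finset (Fin n)) : ℝ :=
  (MeasureTheory.volume {t : ℝ | t ∈ Set.Ioc (0 : ℝ) 1 ∧ threshF x t = S}).toReal

/-- The Lovász extension of `f` over the canonical triangulation of the order polytope:
the piecewise-linear interpolation of the values of `f` along the chain of threshold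
down-sets of `x`. -/
noncomputable def lovaszF {n : ℕ} (f : Finset (Fin n) → EReal) (x : Fin n → ℝ) : EReal :=
  ∑ S : Finset (Fin n), ((weightF x S : ℝ) : EReal) * f S

namespace Stmt10Aux
open Finset MeasureTheory

variable {n : ℕ}

noncomputable def chainC (π : Equiv.Perm (Fin n)) (k : ℕ) : Finset (Fin n) :=
  Finset.univ.filter fun i => ((π.symm i : Fin n) : ℕ) < k

lemma mem_chainC {π : Equiv.Perm (Fin n)} {k : ℕ} {i : Fin n} :
    i ∈ chainC π k ↔ ((π.symm i : Fin n) : ℕ) < k := by simp [chainC]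

lemma chainC_zero (π : Equiv.Perm (Fin n)) : chainC π 0 = ∅ := by
  ext i; simp [mem_chainC]

lemma chainC_univ (π : Equiv.Perm (Fin n)) {k : ℕ} (hk : n ≤ k) : chainC π k = Finset.univ := by
  ext i
  simp only [mem_chainC, Finset.mem_univ, iff_true]
  exact lt_of_lt_of_le (π.symm i).isLt hk

lemma pi_mem_chainC_iff {π : Equiv.Perm (Fin n)} {k : ℕ} {a : Fin n} :
    π a ∈ chainC π k ↔ (a : ℕ) < k := by
  rw [mem_chainC, Equiv.symm_apply_apply]

lemma chainC_succ (π : Equiv.Perm (Fin n)) {k : ℕ} (hk : k < n) :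
    chainC π (k+1) = insert (π ⟨k, hk⟩) (chainC π k) := by
  ext i
  simp only [mem_chainC, Finset.mem_insert]
  constructor
  · intro h
    rcases Nat.lt_succ_iff_lt_or_eq.mp h with h | h
    · exact Or.inr h
    · left
      have : π.symm i = ⟨k, hk⟩ := Fin.ext h
      rw [← this, Equiv.apply_symm_apply]
  · rintro (h | h)
    · rw [h, Equiv.symm_apply_apply]
      exact Nat.lt_succ_self k
    · exact Nat.lt_succ_of_lt h

lemma chainC_injOn (π : Equiv.Perm (Fin n)) {k l : ℕ} (hk : k ≤ n) (hl : l ≤ n)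
    (h : chainC π k = chainC π l) : k = l := by
  by_contra hne
  rcases lt_or_gt_of_ne hne with hlt | hlt
  · have hm : π ⟨k, lt_of_lt_of_le hlt hl⟩ ∈ chainC π l := pi_mem_chainC_iff.mpr hlt
    rw [← h] at hm
    exact absurd (pi_mem_chainC_iff.mp hm) (lt_irrefl k)
  · have hm : π ⟨l, lt_of_lt_of_le hlt hk⟩ ∈ chainC π k := pi_mem_chainC_iff.mpr hlt
    rw [h] at hm
    exact absurd (pi_mem_chainC_iff.mp hm) (lt_irrefl l)

noncomputable def Mval (u : Fin n → ℝ) (π : Equiv.Perm (Fin n)) (k : ℕ) : ℝ :=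
  if k = 0 then 1 else if h : k - 1 < n then u (π ⟨k-1, h⟩) else 0

variable {u : Fin n → ℝ} {π : Equiv.Perm (Fin n)}

section Mval

variable (hu : ∀ i, 0 ≤ u i ∧ u i ≤ 1)
  (hπ : ∀ a b : Fin n, a ≤ b → u (π b) ≤ u (π a))

include hu in
lemma Mval_nonneg (k : ℕ) : 0 ≤ Mval u π k := by
  unfold Mval
  split
  · norm_num
  · split
    · exact (hu _).1
    · exact le_rfl

include hu in
lemma Mval_le_one (k : ℕ) : Mval u π k ≤ 1 := by
  unfold Mval
  split
  · exact le_rfl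
  · split
    · exact (hu _).2
    · norm_num

include hu hπ in
lemma Mval_anti {k l : ℕ} (hkl : k ≤ l) : Mval u π l ≤ Mval u π k := by
  rcases Nat.eq_zero_or_pos k with hk0 | hk0
  · rw [hk0]
    unfold Mval; simp only [if_pos rfl]
    exact Mval_le_one hu l
  · have hl0 : l ≠ 0 := by omega
    unfold Mval
    rw [if_neg hl0, if_neg (by omega : ¬ k = 0)]
    by_cases hkn : k - 1 < n
    · rw [dif_pos hkn]
      by_cases hln : l - 1 < n
      · rw [dif_pos hln]
        exact hπ _ _ (by simp [Fin.le_def]; omega)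
      · rw [dif_neg hln]; exact (hu _).1
    · rw [dif_neg hkn, dif_neg (by omega)]

end Mval

lemma Mval_zero : Mval u π 0 = 1 := by simp [Mval]

lemma Mval_last : Mval u π (n+1) = 0 := by simp [Mval]

lemma Mval_succ {k : ℕ} (hk : k < n) : Mval u π (k+1) = u (π ⟨k, hk⟩) := by
  simp [Mval, hk]

lemma Mval_fin (a : Fin n) : Mval u π ((a : ℕ)+1) = u (π a) := by
  rw [Mval_succ a.isLt]

lemma thresh_eq_chainC_of {t : ℝ} {k : ℕ}
    (h1 : ∀ j : Fin n, (j : ℕ) < k → t < u (π j))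
    (h2 : ∀ j : Fin n, k ≤ (j : ℕ) → u (π j) ≤ t) :
    threshF u t = chainC π k := by
  ext i
  have hrw : u i = u (π (π.symm i)) := by rw [Equiv.apply_symm_apply]
  simp only [threshF, Finset.mem_filter, Finset.mem_univ, true_and, mem_chainC]
  constructor
  · intro h
    by_contra hc
    push_neg at hc
    exact absurd h (not_lt.mpr (hrw ▸ h2 _ hc))
  · intro h
    rw [hrw]
    exact h1 _ h




section Sorted

variable (hu : ∀ i, 0 ≤ u i ∧ u i ≤ 1)
  (hπ : ∀ a b : Fin n, a ≤ b → u (π b) ≤ u (π a))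

include hπ in
lemma exists_chain_eq (t : ℝ) : ∃ k ≤ n, threshF u t = chainC π k := by
  classical
  set F : Finset (Fin n) := univ.filter (fun a : Fin n => t < u (π a)) with hF
  refine ⟨F.card, le_trans (Finset.card_filter_le _ _) (by simp), ?_⟩
  apply thresh_eq_chainC_of
  · intro j hj
    by_contra hc
    push_neg at hc
    have hsub : F ⊆ Finset.Iio j := by
      intro a ha
      rw [hF, Finset.mem_filter] at ha
      rw [Finset.mem_Iio]
      by_contra hja
      push_neg at hja
      exact absurd ha.2 (not_lt.mpr (le_trans (hπ j a hja) hc))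
    have := Finset.card_le_card hsub
    rw [Fin.card_Iio] at this
    omega
  · intro j hj
    by_contra hc
    push_neg at hc
    have hsub : Finset.Iic j ⊆ F := by
      intro a ha
      rw [Finset.mem_Iic] at ha
      rw [hF, Finset.mem_filter]
      exact ⟨Finset.mem_univ a, lt_of_lt_of_le hc (hπ a j ha)⟩
    have := Finset.card_le_card hsub
    rw [Fin.card_Iic] at this
    omega

lemma lt_Mval_of_thresh_eq {t : ℝ} {k : ℕ} (hk : k ≤ n) (hk0 : k ≠ 0)
    (h : threshF u t = chainC π k) : t < Mval u π k := by
  have hkn : k - 1 < n := by omega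
  have hm : π ⟨k-1, hkn⟩ ∈ chainC π k := pi_mem_chainC_iff.mpr (show k - 1 < k by omega)
  rw [← h, threshF, Finset.mem_filter] at hm
  unfold Mval
  rw [if_neg hk0, dif_pos hkn]
  exact hm.2

lemma Mval_le_of_thresh_eq {t : ℝ} {k : ℕ} (hk : k < n)
    (h : threshF u t = chainC π k) : Mval u π (k+1) ≤ t := by
  have hm : π ⟨k, hk⟩ ∉ chainC π k := by
    rw [pi_mem_chainC_iff]; exact (show ¬ k < k by omega)
  rw [← h, threshF, Finset.mem_filter] at hm
  push_neg at hm
  rw [Mval_succ hk]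
  exact hm (Finset.mem_univ _)

include hu hπ in
lemma weight_chainC {k : ℕ} (hk : k ≤ n) :
    weightF u (chainC π k) = Mval u π k - Mval u π (k+1) := by
  set A : Set ℝ := {t : ℝ | t ∈ Set.Ioc (0:ℝ) 1 ∧ threshF u t = chainC π k} with hA
  have hsub1 : Set.Ioo (Mval u π (k+1)) (Mval u π k) ⊆ A := by
    intro t ht
    obtain ⟨ht1, ht2⟩ := ht
    have ht0 : 0 < t := lt_of_le_of_lt (Mval_nonneg hu (k+1)) ht1
    have htle : t ≤ 1 := le_trans (le_of_lt ht2) (Mval_le_one hu k)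
    refine ⟨⟨ht0, htle⟩, ?_⟩
    apply thresh_eq_chainC_of
    · intro j hj
      have hk0 : k ≠ 0 := by omega
      have hkn : k - 1 < n := by omega
      have : u (π ⟨k-1, hkn⟩) ≤ u (π j) := hπ _ _ (by rw [Fin.le_def]; exact (show (j:ℕ) ≤ k-1 by omega))
      refine lt_of_lt_of_le ?_ this
      calc t < Mval u π k := ht2
        _ = u (π ⟨k-1, hkn⟩) := by unfold Mval; rw [if_neg hk0, dif_pos hkn]
    · intro j hj
      have hkn : k < n := lt_of_le_of_lt hj j.isLt
      have : u (π j) ≤ u (π ⟨k, hkn⟩) := hπ _ _ (by rw [Fin.le_def]; exact (show k ≤ (j:ℕ) from hj))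
      refine le_trans this (le_trans ?_ (le_of_lt ht1))
      rw [Mval_succ hkn]
  have hsub2 : A ⊆ Set.Icc (Mval u π (k+1)) (Mval u π k) := by
    intro t ht
    obtain ⟨⟨ht0, ht1⟩, hteq⟩ := ht
    constructor
    · rcases Nat.lt_or_ge k n with hkn | hkn
      · exact Mval_le_of_thresh_eq hkn hteq
      · have : k + 1 - 1 < n → False := by omega
        unfold Mval
        rw [if_neg (by omega : ¬ k+1 = 0), dif_neg (by omega)]
        exact le_of_lt ht0
    · rcases Nat.eq_zero_or_pos k with hk0 | hk0
      · rw [hk0, Mval_zero]; exact ht1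
      · exact le_of_lt (lt_Mval_of_thresh_eq hk (by omega) hteq)
  have hmm : Mval u π (k+1) ≤ Mval u π k := Mval_anti hu hπ (by omega)
  have hvol : MeasureTheory.volume A = ENNReal.ofReal (Mval u π k - Mval u π (k+1)) := by
    apply le_antisymm
    · calc MeasureTheory.volume A ≤ MeasureTheory.volume (Set.Icc (Mval u π (k+1)) (Mval u π k)) :=
            MeasureTheory.measure_mono hsub2
        _ = ENNReal.ofReal (Mval u π k - Mval u π (k+1)) := Real.volume_Icc
    · calc ENNReal.ofReal (Mval u π k - Mval u π (k+1))
          = MeasureTheory.volume (Set.Ioo (Mval u π (k+1)) (Mval u π k)) := Real.volume_Ioo.symm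
        _ ≤ MeasureTheory.volume A := MeasureTheory.measure_mono hsub1
  rw [weightF, ← hA, hvol, ENNReal.toReal_ofReal (by linarith)]

include hπ in
lemma weight_eq_zero {S : Finset (Fin n)} (hS : ∀ k ≤ n, S ≠ chainC π k) :
    weightF u S = 0 := by
  have : {t : ℝ | t ∈ Set.Ioc (0:ℝ) 1 ∧ threshF u t = S} = ∅ := by
    ext t
    simp only [Set.mem_setOf_eq, Set.mem_empty_iff_false, iff_false, not_and]
    intro _
    obtain ⟨k, hk, hke⟩ := exists_chain_eq hπ t
    rw [hke]
    exact fun h => hS k hk h.symm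
  rw [weightF, this]
  simp

include hu hπ in
lemma sum_formula (g : Finset (Fin n) → ℝ) :
    ∑ S : Finset (Fin n), weightF u S * g S
      = ∑ k ∈ Finset.range (n+1), (Mval u π k - Mval u π (k+1)) * g (chainC π k) := by
  classical
  have h1 : ∑ k ∈ Finset.range (n+1), (Mval u π k - Mval u π (k+1)) * g (chainC π k)
      = ∑ k ∈ Finset.range (n+1), weightF u (chainC π k) * g (chainC π k) := by
    apply Finset.sum_congr rfl
    intro k hk
    rw [Finset.mem_range] at hk
    rw [weight_chainC hu hπ (by omega)]
  have h2 : ∑ k ∈ Finset.range (n+1), weightF u (chainC π k) * g (chainC π k)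
      = ∑ S ∈ (Finset.range (n+1)).image (chainC π), weightF u S * g S := by
    rw [Finset.sum_image]
    intro k hk l hl h
    rw [Finset.mem_coe, Finset.mem_range] at hk hl
    exact chainC_injOn π (by omega) (by omega) h
  rw [h1, h2]
  apply (Finset.sum_subset (Finset.subset_univ _) _).symm
  intro S _ hS
  have : ∀ k ≤ n, S ≠ chainC π k := by
    intro k hk he
    exact hS (Finset.mem_image.mpr ⟨k, Finset.mem_range.mpr (by omega), he.symm⟩)
  rw [weight_eq_zero hπ this, zero_mul]

end Sorted

lemma abel_sum (M G : ℕ → ℝ) (n : ℕ) :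
    ∑ k ∈ Finset.range (n+1), (M k - M (k+1)) * G k
      = M 0 * G 0 - M (n+1) * G n + ∑ k ∈ Finset.range n, M (k+1) * (G (k+1) - G k) := by
  induction n with
  | zero => simp; ring
  | succ m ih =>
    rw [Finset.sum_range_succ, ih, Finset.sum_range_succ]
    ring

variable {g : Finset (Fin n) → ℝ}

lemma edm (hg : ∀ A B : Finset (Fin n), g (A ∩ B) + g (A ∪ B) ≤ g A + g B)
    (π : Equiv.Perm (Fin n)) (T : Finset (Fin n)) :
    ∑ a : Fin n, (if π a ∈ T then g (chainC π ((a:ℕ)+1)) - g (chainC π (a:ℕ)) else 0)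
      ≤ g T - g ∅ := by
  classical
  have key : ∀ a : Fin n,
      (if π a ∈ T then g (chainC π ((a:ℕ)+1)) - g (chainC π (a:ℕ)) else 0)
        ≤ g (chainC π ((a:ℕ)+1) ∩ T) - g (chainC π (a:ℕ) ∩ T) := by
    intro a
    by_cases ha : π a ∈ T
    · rw [if_pos ha]
      have hsucc : chainC π ((a:ℕ)+1) = insert (π a) (chainC π (a:ℕ)) := by
        rw [chainC_succ π a.isLt]
      have hunion : chainC π (a:ℕ) ∪ (chainC π ((a:ℕ)+1) ∩ T) = chainC π ((a:ℕ)+1) := by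
        ext i
        simp only [Finset.mem_union, Finset.mem_inter, hsucc, Finset.mem_insert]
        constructor
        · rintro (h | ⟨h1 | h1, h2⟩)
          · exact Or.inr h
          · exact Or.inl h1
          · exact Or.inr h1
        · rintro (h | h)
          · exact Or.inr ⟨Or.inl h, h ▸ ha⟩
          · exact Or.inl h
      have hinter : chainC π (a:ℕ) ∩ (chainC π ((a:ℕ)+1) ∩ T) = chainC π (a:ℕ) ∩ T := by
        ext i
        simp only [Finset.mem_inter, mem_chainC]
        constructor
        · rintro ⟨h1, _, h3⟩; exact ⟨h1, h3⟩
        · rintro ⟨h1, h3⟩; exact ⟨h1, by omega, h3⟩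
      have := hg (chainC π (a:ℕ)) (chainC π ((a:ℕ)+1) ∩ T)
      rw [hunion, hinter] at this
      linarith
    · rw [if_neg ha]
      have : chainC π ((a:ℕ)+1) ∩ T = chainC π (a:ℕ) ∩ T := by
        ext i
        simp only [Finset.mem_inter, mem_chainC]
        constructor
        · rintro ⟨h1, h3⟩
          refine ⟨?_, h3⟩
          rcases Nat.lt_succ_iff_lt_or_eq.mp h1 with h | h
          · exact h
          · exfalso
            have : i = π a := by
              have : π.symm i = a := Fin.ext h
              rw [← this, Equiv.apply_symm_apply]
            exact ha (this ▸ h3)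
        · rintro ⟨h1, h3⟩; exact ⟨by omega, h3⟩
      rw [this]
      simp
  calc ∑ a : Fin n, (if π a ∈ T then g (chainC π ((a:ℕ)+1)) - g (chainC π (a:ℕ)) else 0)
      ≤ ∑ a : Fin n, (g (chainC π ((a:ℕ)+1) ∩ T) - g (chainC π (a:ℕ) ∩ T)) :=
        Finset.sum_le_sum (fun a _ => key a)
    _ = ∑ k ∈ Finset.range n, (g (chainC π (k+1) ∩ T) - g (chainC π k ∩ T)) :=
        Fin.sum_univ_eq_sum_range (fun k => g (chainC π (k+1) ∩ T) - g (chainC π k ∩ T)) n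
    _ = g (chainC π n ∩ T) - g (chainC π 0 ∩ T) :=
        Finset.sum_range_sub (fun k => g (chainC π k ∩ T)) n
    _ = g T - g ∅ := by
          rw [chainC_univ π (le_refl n), chainC_zero]
          simp

lemma sum_mul_eq (hu : ∀ i, 0 ≤ u i ∧ u i ≤ 1) (σ : Equiv.Perm (Fin n)) (v : Fin n → ℝ) :
    ∑ i : Fin n, u i * v i
      = ∑ j ∈ Finset.range (n+1),
          (Mval u σ j - Mval u σ (j+1)) * ∑ i ∈ chainC σ j, v i := by
  classical
  have hinner : ∀ j, ∑ i ∈ chainC σ j, v i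
      = ∑ i : Fin n, (if ((σ.symm i : Fin n) : ℕ) < j then v i else 0) := by
    intro j
    rw [chainC, Finset.sum_filter]
  have hswap : ∑ j ∈ Finset.range (n+1),
      (Mval u σ j - Mval u σ (j+1)) * ∑ i ∈ chainC σ j, v i
      = ∑ i : Fin n, ∑ j ∈ Finset.range (n+1),
          (Mval u σ j - Mval u σ (j+1)) * (if ((σ.symm i : Fin n) : ℕ) < j then v i else 0) := by
    rw [Finset.sum_comm]
    apply Finset.sum_congr rfl
    intro j _
    rw [hinner j, Finset.mul_sum]
  rw [hswap]
  apply Finset.sum_congr rfl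
  intro i _
  set p : ℕ := ((σ.symm i : Fin n) : ℕ) with hp
  have hpn : p < n := (σ.symm i).isLt
  set F : ℕ → ℝ := fun j => (if p < j then Mval u σ j else Mval u σ (p+1)) * v i with hFdef
  have hterm : ∀ j, (Mval u σ j - Mval u σ (j+1)) * (if p < j then v i else 0)
      = F j - F (j+1) := by
    intro j
    simp only [hFdef]
    by_cases h1 : p < j
    · rw [if_pos h1, if_pos h1, if_pos (by omega)]
      ring
    · rw [if_neg h1, if_neg h1]
      by_cases h2 : p < j + 1
      · rw [if_pos h2]
        have : j = p := by omega
        rw [this]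
        ring
      · rw [if_neg h2]
        ring
  symm
  calc ∑ j ∈ Finset.range (n+1),
        (Mval u σ j - Mval u σ (j+1)) * (if p < j then v i else 0)
      = ∑ j ∈ Finset.range (n+1), (F j - F (j+1)) := Finset.sum_congr rfl (fun j _ => hterm j)
    _ = F 0 - F (n+1) := Finset.sum_range_sub' F (n+1)
    _ = u i * v i := by
        simp only [hFdef]
        rw [if_neg (by omega : ¬ p < 0), if_pos (by omega : p < n+1), Mval_last]
        have : Mval u σ (p+1) = u i := by
          have h2 : Mval u σ (p+1) = u (σ (σ.symm i)) := Mval_fin (σ.symm i)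
          rw [h2, Equiv.apply_symm_apply]
        rw [this]
        ring

lemma exists_sorted (u : Fin n → ℝ) :
    ∃ π : Equiv.Perm (Fin n), ∀ a b : Fin n, a ≤ b → u (π b) ≤ u (π a) := by
  refine ⟨Tuple.sort (fun i => -u i), fun a b hab => ?_⟩
  have := Tuple.monotone_sort (fun i => -u i) hab
  simp only [Function.comp_apply] at this
  linarith

lemma weight_nonneg (u : Fin n → ℝ) (S : Finset (Fin n)) : 0 ≤ weightF u S :=
  ENNReal.toReal_nonneg

lemma sum_weight_eq_one (u : Fin n → ℝ) (hu : ∀ i, 0 ≤ u i ∧ u i ≤ 1) :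
    ∑ S : Finset (Fin n), weightF u S = 1 := by
  obtain ⟨σ, hσ⟩ := exists_sorted u
  have := sum_formula hu hσ (fun _ => (1:ℝ))
  simp only [mul_one] at this
  rw [this, Finset.sum_range_sub' (Mval u σ) (n+1), Mval_zero, Mval_last]
  ring

lemma core_convex (g : Finset (Fin n) → ℝ)
    (hg : ∀ A B : Finset (Fin n), g (A ∩ B) + g (A ∪ B) ≤ g A + g B)
    (x y : Fin n → ℝ) (hx : ∀ i, 0 ≤ x i ∧ x i ≤ 1) (hy : ∀ i, 0 ≤ y i ∧ y i ≤ 1)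
    (t : ℝ) (ht0 : 0 ≤ t) (ht1 : t ≤ 1) :
    ∑ S : Finset (Fin n), weightF (fun i => t * x i + (1-t) * y i) S * g S
      ≤ t * ∑ S : Finset (Fin n), weightF x S * g S
        + (1-t) * ∑ S : Finset (Fin n), weightF y S * g S := by
  classical
  set z : Fin n → ℝ := fun i => t * x i + (1-t) * y i with hzdef
  have hz : ∀ i, 0 ≤ z i ∧ z i ≤ 1 := by
    intro i
    obtain ⟨h1, h2⟩ := hx i
    obtain ⟨h3, h4⟩ := hy i
    constructor
    · have := mul_nonneg ht0 h1
      have := mul_nonneg (by linarith : (0:ℝ) ≤ 1 - t) h3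
      simp only [hzdef]; linarith
    · have := mul_le_mul_of_nonneg_left h2 ht0
      have := mul_le_mul_of_nonneg_left h4 (by linarith : (0:ℝ) ≤ 1 - t)
      simp only [hzdef]; linarith
  obtain ⟨π, hπ⟩ := exists_sorted z
  set d : ℕ → ℝ := fun k => g (chainC π (k+1)) - g (chainC π k) with hd
  -- key bound
  have keybound : ∀ (u : Fin n → ℝ), (∀ i, 0 ≤ u i ∧ u i ≤ 1) →
      ∑ a : Fin n, u (π a) * d (a:ℕ) ≤ (∑ S : Finset (Fin n), weightF u S * g S) - g ∅ := by
    intro u hu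
    obtain ⟨σ, hσ⟩ := exists_sorted u
    set v : Fin n → ℝ := fun i => d (((π.symm i : Fin n) : ℕ)) with hv
    have step1 : ∑ a : Fin n, u (π a) * d (a:ℕ) = ∑ i : Fin n, u i * v i := by
      rw [← Equiv.sum_comp π (fun i => u i * v i)]
      apply Finset.sum_congr rfl
      intro a _
      simp only [hv, Equiv.symm_apply_apply]
    have step3 : ∀ T : Finset (Fin n), ∑ i ∈ T, v i ≤ g T - g ∅ := by
      intro T
      have h1 : ∑ i ∈ T, v i = ∑ i : Fin n, (if i ∈ T then v i else 0) := by
        rw [Finset.sum_ite_mem, Finset.univ_inter]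
      have h2 : ∑ i : Fin n, (if i ∈ T then v i else 0)
          = ∑ a : Fin n, (if π a ∈ T then g (chainC π ((a:ℕ)+1)) - g (chainC π (a:ℕ)) else 0) := by
        rw [← Equiv.sum_comp π (fun i => if i ∈ T then v i else 0)]
        apply Finset.sum_congr rfl
        intro a _
        simp only [hv, Equiv.symm_apply_apply, hd]
      rw [h1, h2]
      exact edm hg π T
    have step4 : ∑ i : Fin n, u i * v i
        ≤ ∑ j ∈ Finset.range (n+1), (Mval u σ j - Mval u σ (j+1)) * (g (chainC σ j) - g ∅) := by
      rw [sum_mul_eq hu σ v]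
      apply Finset.sum_le_sum
      intro j _
      apply mul_le_mul_of_nonneg_left (step3 _)
      have := Mval_anti hu hσ (Nat.le_succ j)
      linarith
    have step5 : ∑ j ∈ Finset.range (n+1), (Mval u σ j - Mval u σ (j+1)) * (g (chainC σ j) - g ∅)
        = (∑ S : Finset (Fin n), weightF u S * g S) - g ∅ := by
      have e1 : ∀ j, (Mval u σ j - Mval u σ (j+1)) * (g (chainC σ j) - g ∅)
          = (Mval u σ j - Mval u σ (j+1)) * g (chainC σ j)
            - (Mval u σ j - Mval u σ (j+1)) * g ∅ := fun j => by ring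
      rw [Finset.sum_congr rfl (fun j _ => e1 j), Finset.sum_sub_distrib,
        ← Finset.sum_mul, Finset.sum_range_sub' (Mval u σ) (n+1), Mval_zero, Mval_last,
        ← sum_formula hu hσ g]
      ring
    rw [step1]
    exact le_trans step4 (le_of_eq step5)
  -- value at z
  have hzval : ∑ S : Finset (Fin n), weightF z S * g S
      = g ∅ + ∑ a : Fin n, z (π a) * d (a:ℕ) := by
    rw [sum_formula hz hπ g, abel_sum (Mval z π) (fun k => g (chainC π k)) n,
      Mval_zero, Mval_last, chainC_zero]
    have : ∑ k ∈ Finset.range n, Mval z π (k+1) * (g (chainC π (k+1)) - g (chainC π k))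
        = ∑ a : Fin n, z (π a) * d (a:ℕ) := by
      rw [← Fin.sum_univ_eq_sum_range (fun k => Mval z π (k+1) * d k) n]
      apply Finset.sum_congr rfl
      intro a _
      rw [Mval_fin a]
    rw [this]
    ring
  have hsplit : ∑ a : Fin n, z (π a) * d (a:ℕ)
      = t * ∑ a : Fin n, x (π a) * d (a:ℕ) + (1-t) * ∑ a : Fin n, y (π a) * d (a:ℕ) := by
    rw [Finset.mul_sum, Finset.mul_sum, ← Finset.sum_add_distrib]
    apply Finset.sum_congr rfl
    intro a _
    simp only [hzdef]
    ring
  have hA := keybound x hx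
  have hB := keybound y hy
  have hA' := mul_le_mul_of_nonneg_left hA ht0
  have hB' := mul_le_mul_of_nonneg_left hB (by linarith : (0:ℝ) ≤ 1 - t)
  rw [hzval, hsplit]
  nlinarith [hA', hB']

lemma card_ineq (S1 S2 T1 T2 : Finset (Fin n)) :
    (((S1 ∩ S2) \ (T1 ∩ T2)).card + ((T1 ∩ T2) \ (S1 ∩ S2)).card)
      + (((S1 ∪ S2) \ (T1 ∪ T2)).card + ((T1 ∪ T2) \ (S1 ∪ S2)).card)
    ≤ ((S1 \ T1).card + (T1 \ S1).card) + ((S2 \ T2).card + (T2 \ S2).card) := by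
  classical
  have hcard : ∀ A : Finset (Fin n), A.card = ∑ i : Fin n, (if i ∈ A then 1 else 0) := by
    intro A
    rw [Finset.sum_ite_mem, Finset.univ_inter, Finset.card_eq_sum_ones]
  simp only [hcard]
  rw [← Finset.sum_add_distrib, ← Finset.sum_add_distrib, ← Finset.sum_add_distrib,
    ← Finset.sum_add_distrib, ← Finset.sum_add_distrib, ← Finset.sum_add_distrib]
  apply Finset.sum_le_sum
  intro i _
  by_cases h1 : i ∈ S1 <;> by_cases h2 : i ∈ S2 <;> by_cases h3 : i ∈ T1 <;> by_cases h4 : i ∈ T2 <;>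
    simp [Finset.mem_sdiff, Finset.mem_union, Finset.mem_inter, h1, h2, h3, h4]

lemma exists_extension (Lfin : Finset (Finset (Fin n))) (hne : Lfin.Nonempty)
    (hcl : ∀ A ∈ Lfin, ∀ B ∈ Lfin, A ∩ B ∈ Lfin ∧ A ∪ B ∈ Lfin)
    (f0 : Finset (Fin n) → ℝ)
    (hsub : ∀ A ∈ Lfin, ∀ B ∈ Lfin, f0 (A ∩ B) + f0 (A ∪ B) ≤ f0 A + f0 B) :
    ∃ g : Finset (Fin n) → ℝ,
      (∀ A B : Finset (Fin n), g (A ∩ B) + g (A ∪ B) ≤ g A + g B) ∧ ∀ S ∈ Lfin, g S = f0 S := by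
  classical
  set Bnd : ℝ := Lfin.sup' hne (fun T => |f0 T|) with hBnddef
  set M : ℝ := 2 * Bnd + 1 with hMdef
  have hBnd : ∀ T ∈ Lfin, |f0 T| ≤ Bnd := by
    intro T hT
    rw [hBnddef]
    exact Finset.le_sup' (fun T => |f0 T|) hT
  obtain ⟨T0, hT0⟩ := hne
  have hM : 0 < M := by
    have h1 := hBnd T0 hT0
    have h2 := abs_nonneg (f0 T0)
    rw [hMdef]; linarith
  set D : Finset (Fin n) → Finset (Fin n) → ℝ :=
    fun S T => ((S \ T).card : ℝ) + ((T \ S).card : ℝ) with hDdef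
  have hD0 : ∀ S, D S S = 0 := by intro S; simp [hDdef]
  have hDnn : ∀ S T, 0 ≤ D S T := by
    intro S T; simp only [hDdef]; positivity
  have hDpos : ∀ S T, S ≠ T → 1 ≤ D S T := by
    intro S T hST
    by_cases h : S \ T = ∅
    · have h2 : T \ S ≠ ∅ := by
        intro h2
        exact hST (Finset.Subset.antisymm (Finset.sdiff_eq_empty_iff_subset.mp h)
          (Finset.sdiff_eq_empty_iff_subset.mp h2))
      have : 1 ≤ (T \ S).card := Finset.card_pos.mpr (Finset.nonempty_of_ne_empty h2)
      simp only [hDdef]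
      have : (1:ℝ) ≤ ((T \ S).card : ℝ) := by exact_mod_cast this
      have : (0:ℝ) ≤ ((S \ T).card : ℝ) := by positivity
      linarith
    · have : 1 ≤ (S \ T).card := Finset.card_pos.mpr (Finset.nonempty_of_ne_empty h)
      simp only [hDdef]
      have h1 : (1:ℝ) ≤ ((S \ T).card : ℝ) := by exact_mod_cast this
      have h2 : (0:ℝ) ≤ ((T \ S).card : ℝ) := by positivity
      linarith
  have hDineq : ∀ S1 S2 T1 T2 : Finset (Fin n),
      D (S1 ∩ S2) (T1 ∩ T2) + D (S1 ∪ S2) (T1 ∪ T2) ≤ D S1 T1 + D S2 T2 := by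
    intro S1 S2 T1 T2
    have := card_ineq S1 S2 T1 T2
    simp only [hDdef]
    push_cast
    exact_mod_cast (by exact_mod_cast this : 
      ((((S1 ∩ S2) \ (T1 ∩ T2)).card + ((T1 ∩ T2) \ (S1 ∩ S2)).card)
      + (((S1 ∪ S2) \ (T1 ∪ T2)).card + ((T1 ∪ T2) \ (S1 ∪ S2)).card) : ℝ)
    ≤ (((S1 \ T1).card + (T1 \ S1).card) + ((S2 \ T2).card + (T2 \ S2).card) : ℝ))
  refine ⟨fun S => Lfin.inf' ⟨T0, hT0⟩ (fun T => f0 T + M * D S T), ?_, ?_⟩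
  · intro A B
    beta_reduce
    obtain ⟨T1, hT1, hval1⟩ := Finset.exists_mem_eq_inf' ⟨T0, hT0⟩ (fun T => f0 T + M * D A T)
    obtain ⟨T2, hT2, hval2⟩ := Finset.exists_mem_eq_inf' ⟨T0, hT0⟩ (fun T => f0 T + M * D B T)
    have hint : Lfin.inf' ⟨T0, hT0⟩ (fun T => f0 T + M * D (A ∩ B) T)
        ≤ f0 (T1 ∩ T2) + M * D (A ∩ B) (T1 ∩ T2) :=
      Finset.inf'_le _ ((hcl T1 hT1 T2 hT2).1)
    have huni : Lfin.inf' ⟨T0, hT0⟩ (fun T => f0 T + M * D (A ∪ B) T)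
        ≤ f0 (T1 ∪ T2) + M * D (A ∪ B) (T1 ∪ T2) :=
      Finset.inf'_le _ ((hcl T1 hT1 T2 hT2).2)
    have hsb := hsub T1 hT1 T2 hT2
    have hdd := mul_le_mul_of_nonneg_left (hDineq A B T1 T2) (le_of_lt hM)
    rw [hval1, hval2]
    rw [mul_add] at hdd
    linarith
  · intro S hS
    beta_reduce
    apply le_antisymm
    · have h := Finset.inf'_le (fun T => f0 T + M * D S T) hS
      rw [hD0] at h
      simpa using h
    · apply Finset.le_inf'
      intro T hT
      by_cases hST : S = T
      · subst hST
        rw [hD0]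
        simp
      · have h1 := hDpos S T hST
        have h2 := (abs_le.mp (hBnd S hS)).1
        have h2' := (abs_le.mp (hBnd S hS)).2
        have h3 := (abs_le.mp (hBnd T hT)).1
        have hMD : M * 1 ≤ M * D S T := mul_le_mul_of_nonneg_left h1 (le_of_lt hM)
        rw [hMdef] at hMD ⊢
        linarith

lemma coe_sum_ereal {ι : Type*} (s : Finset ι) (h : ι → ℝ) :
    ((∑ i ∈ s, h i : ℝ) : EReal) = ∑ i ∈ s, ((h i : ℝ) : EReal) := by
  classical
  induction s using Finset.cons_induction with
  | empty => simp
  | cons a s ha ih => rw [Finset.sum_cons, Finset.sum_cons, EReal.coe_add, ih]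

lemma sum_ne_bot_ereal {ι : Type*} (s : Finset ι) (h : ι → EReal)
    (hb : ∀ i ∈ s, h i ≠ ⊥) : ∑ i ∈ s, h i ≠ ⊥ := by
  classical
  induction s using Finset.cons_induction with
  | empty => simp
  | cons a s ha ih =>
    rw [Finset.sum_cons]
    intro hcon
    rcases EReal.add_eq_bot_iff.mp hcon with h | h
    · exact hb a (Finset.mem_cons_self a s) h
    · exact ih (fun i hi => hb i (Finset.mem_cons_of_mem hi)) h

lemma sum_eq_top_ereal {ι : Type*} (s : Finset ι) (h : ι → EReal)
    (hb : ∀ i ∈ s, h i ≠ ⊥) {i₀ : ι} (hi₀ : i₀ ∈ s) (ht : h i₀ = ⊤) :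
    ∑ i ∈ s, h i = ⊤ := by
  classical
  rw [← Finset.add_sum_erase s h hi₀, ht]
  exact EReal.top_add_of_ne_bot
    (sum_ne_bot_ereal _ _ (fun i hi => hb i (Finset.mem_of_mem_erase hi)))

lemma coe_mul_ne_bot_ereal {a : ℝ} (ha : 0 ≤ a) {b : EReal} (hb : b ≠ ⊥) :
    (a : EReal) * b ≠ ⊥ := by
  induction b using EReal.rec with
  | bot => exact absurd rfl hb
  | coe r => rw [← EReal.coe_mul]; exact EReal.coe_ne_bot _
  | top =>
    rcases eq_or_lt_of_le ha with h | h
    · rw [← h, EReal.coe_zero, zero_mul]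
      simp
    · rw [EReal.mul_top_of_pos (EReal.coe_pos.mpr h)]
      simp

lemma lovasz_ne_bot (f : Finset (Fin n) → EReal) (hf : ∀ S, f S ≠ ⊥) (x : Fin n → ℝ) :
    ∑ S : Finset (Fin n), ((weightF x S : ℝ) : EReal) * f S ≠ ⊥ :=
  sum_ne_bot_ereal _ _ (fun S _ => coe_mul_ne_bot_ereal (weight_nonneg x S) (hf S))

lemma lovasz_top_of (f : Finset (Fin n) → EReal) (hf : ∀ S, f S ≠ ⊥) (x : Fin n → ℝ)
    {S₀ : Finset (Fin n)} (hw : 0 < weightF x S₀) (htop : f S₀ = ⊤) :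
    ∑ S : Finset (Fin n), ((weightF x S : ℝ) : EReal) * f S = ⊤ := by
  apply sum_eq_top_ereal _ _ (fun S _ => coe_mul_ne_bot_ereal (weight_nonneg x S) (hf S))
    (Finset.mem_univ S₀)
  rw [htop]
  exact EReal.mul_top_of_pos (EReal.coe_pos.mpr hw)

lemma lovasz_eq_coe (f : Finset (Fin n) → EReal) (g : Finset (Fin n) → ℝ) (x : Fin n → ℝ)
    (hco : ∀ S, 0 < weightF x S → ((g S : ℝ) : EReal) = f S) :
    ∑ S : Finset (Fin n), ((weightF x S : ℝ) : EReal) * f S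
      = ((∑ S : Finset (Fin n), weightF x S * g S : ℝ) : EReal) := by
  rw [coe_sum_ereal]
  apply Finset.sum_congr rfl
  intro S _
  rcases eq_or_lt_of_le (weight_nonneg x S) with h | h
  · rw [← h, EReal.coe_zero, zero_mul, zero_mul, EReal.coe_zero]
  · rw [EReal.coe_mul, hco S h]

lemma pos_weight_exists {x : Fin n → ℝ} {S : Finset (Fin n)} (h : 0 < weightF x S) :
    ∃ t₀ : ℝ, t₀ ∈ Set.Ioc (0:ℝ) 1 ∧ threshF x t₀ = S := by
  by_contra hc
  push_neg at hc
  have he : {t : ℝ | t ∈ Set.Ioc (0:ℝ) 1 ∧ threshF x t = S} = ∅ := by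
    ext t
    simp only [Set.mem_setOf_eq, Set.mem_empty_iff_false, iff_false, not_and]
    exact hc t
  rw [weightF, he] at h
  simp at h

lemma weight_subset_Ioc (x : Fin n → ℝ) (S : Finset (Fin n)) :
    MeasureTheory.volume {t : ℝ | t ∈ Set.Ioc (0:ℝ) 1 ∧ threshF x t = S} ≠ ⊤ := by
  apply ne_top_of_le_ne_top (b := MeasureTheory.volume (Set.Ioc (0:ℝ) 1))
  · rw [Real.volume_Ioc]
    exact ENNReal.ofReal_ne_top
  · exact MeasureTheory.measure_mono (fun t ht => ht.1)

lemma weight_ge_interval {x : Fin n → ℝ} {S : Finset (Fin n)} {a b : ℝ}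
    (hab : a < b) (hsub : Set.Ioo a b ⊆ {t : ℝ | t ∈ Set.Ioc (0:ℝ) 1 ∧ threshF x t = S}) :
    0 < weightF x S := by
  have h1 : (0:ℝ) < b - a := by linarith
  calc (0:ℝ) < b - a := h1
    _ = (MeasureTheory.volume (Set.Ioo a b)).toReal := by
        rw [Real.volume_Ioo, ENNReal.toReal_ofReal (le_of_lt h1)]
    _ ≤ weightF x S :=
        ENNReal.toReal_mono (weight_subset_Ioc x S) (MeasureTheory.measure_mono hsub)

lemma weight_ge_pos {x : Fin n → ℝ} (hx : ∀ i, 0 ≤ x i ∧ x i ≤ 1) (i : Fin n)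
    (hxi : 0 < x i) :
    0 < weightF x (Finset.univ.filter fun j => x i ≤ x j) := by
  classical
  set V : Finset ℝ := insert 0 ((Finset.univ.filter (fun j => x j < x i)).image x) with hV
  have hVne : V.Nonempty := ⟨0, Finset.mem_insert_self _ _⟩
  set c : ℝ := V.max' hVne with hc
  have hc0 : 0 ≤ c := Finset.le_max' V 0 (Finset.mem_insert_self _ _)
  have hclt : c < x i := by
    rw [hc, Finset.max'_lt_iff]
    intro r hr
    rcases Finset.mem_insert.mp hr with h | h
    · rw [h]; exact hxi
    · obtain ⟨j, hj, hje⟩ := Finset.mem_image.mp h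
      rw [← hje]
      exact (Finset.mem_filter.mp hj).2
  have hcb : ∀ j, x j < x i → x j ≤ c := by
    intro j hj
    exact Finset.le_max' V (x j) (Finset.mem_insert_of_mem
      (Finset.mem_image.mpr ⟨j, Finset.mem_filter.mpr ⟨Finset.mem_univ j, hj⟩, rfl⟩))
  apply weight_ge_interval hclt
  intro s hs
  obtain ⟨hs1, hs2⟩ := hs
  refine ⟨⟨lt_of_le_of_lt hc0 hs1, le_trans (le_of_lt hs2) (hx i).2⟩, ?_⟩
  ext j
  simp only [threshF, Finset.mem_filter, Finset.mem_univ, true_and]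
  constructor
  · intro h
    by_contra hcj
    push_neg at hcj
    exact absurd h (not_lt.mpr (le_trans (hcb j hcj) (le_of_lt hs1)))
  · intro h
    exact lt_of_lt_of_le hs2 h

lemma weight_gt_pos {x : Fin n → ℝ} (hx : ∀ i, 0 ≤ x i ∧ x i ≤ 1) (i : Fin n)
    (hxi : x i < 1) :
    0 < weightF x (Finset.univ.filter fun j => x i < x j) := by
  classical
  set V : Finset ℝ := insert 1 ((Finset.univ.filter (fun j => x i < x j)).image x) with hV
  have hVne : V.Nonempty := ⟨1, Finset.mem_insert_self _ _⟩
  set c : ℝ := V.min' hVne with hc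
  have hc1 : c ≤ 1 := Finset.min'_le V 1 (Finset.mem_insert_self _ _)
  have hclt : x i < c := by
    rw [hc, Finset.lt_min'_iff]
    intro r hr
    rcases Finset.mem_insert.mp hr with h | h
    · rw [h]; exact hxi
    · obtain ⟨j, hj, hje⟩ := Finset.mem_image.mp h
      rw [← hje]
      exact (Finset.mem_filter.mp hj).2
  have hcb : ∀ j, x i < x j → c ≤ x j := by
    intro j hj
    exact Finset.min'_le V (x j) (Finset.mem_insert_of_mem
      (Finset.mem_image.mpr ⟨j, Finset.mem_filter.mpr ⟨Finset.mem_univ j, hj⟩, rfl⟩))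
  apply weight_ge_interval hclt
  intro s hs
  obtain ⟨hs1, hs2⟩ := hs
  refine ⟨⟨lt_of_le_of_lt (hx i).1 hs1, le_trans (le_of_lt hs2) hc1⟩, ?_⟩
  ext j
  simp only [threshF, Finset.mem_filter, Finset.mem_univ, true_and]
  constructor
  · intro h
    exact lt_trans hs1 h
  · intro h
    exact lt_of_lt_of_le hs2 (hcb j h)

lemma weight_subset_singleton {x : Fin n → ℝ} {S : Finset (Fin n)}
    (h : {t : ℝ | t ∈ Set.Ioc (0:ℝ) 1 ∧ threshF x t = S} ⊆ {1}) : weightF x S = 0 := by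
  rw [weightF]
  have : MeasureTheory.volume {t : ℝ | t ∈ Set.Ioc (0:ℝ) 1 ∧ threshF x t = S} = 0 := by
    apply le_antisymm _ zero_le
    calc MeasureTheory.volume {t : ℝ | t ∈ Set.Ioc (0:ℝ) 1 ∧ threshF x t = S}
        ≤ MeasureTheory.volume ({1} : Set ℝ) := MeasureTheory.measure_mono h
      _ = 0 := Real.volume_singleton
  rw [this]
  simp

lemma weight_eq_of_interval {x : Fin n → ℝ} {S : Finset (Fin n)} {a b : ℝ} (hab : a ≤ b)
    (h1 : Set.Ioo a b ⊆ {t : ℝ | t ∈ Set.Ioc (0:ℝ) 1 ∧ threshF x t = S})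
    (h2 : {t : ℝ | t ∈ Set.Ioc (0:ℝ) 1 ∧ threshF x t = S} ⊆ Set.Icc a b) :
    weightF x S = b - a := by
  rw [weightF]
  have : MeasureTheory.volume {t : ℝ | t ∈ Set.Ioc (0:ℝ) 1 ∧ threshF x t = S}
      = ENNReal.ofReal (b - a) := by
    apply le_antisymm
    · calc MeasureTheory.volume {t : ℝ | t ∈ Set.Ioc (0:ℝ) 1 ∧ threshF x t = S}
          ≤ MeasureTheory.volume (Set.Icc a b) := MeasureTheory.measure_mono h2
        _ = ENNReal.ofReal (b - a) := Real.volume_Icc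
    · calc ENNReal.ofReal (b - a) = MeasureTheory.volume (Set.Ioo a b) := Real.volume_Ioo.symm
        _ ≤ _ := MeasureTheory.measure_mono h1
  rw [this, ENNReal.toReal_ofReal (by linarith)]

lemma lovasz_indicator (f : Finset (Fin n) → EReal) (S : Finset (Fin n)) :
    ∑ T : Finset (Fin n),
        ((weightF (fun i => if i ∈ S then (1:ℝ) else 0) T : ℝ) : EReal) * f T = f S := by
  classical
  set x : Fin n → ℝ := fun i => if i ∈ S then (1:ℝ) else 0 with hx
  have hthresh : ∀ s : ℝ, 0 < s → s < 1 → threshF x s = S := by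
    intro s h0 h1
    ext i
    simp only [threshF, Finset.mem_filter, Finset.mem_univ, true_and, hx]
    by_cases hi : i ∈ S <;> simp [hi]
    · exact h1
    · linarith
  have hwS : weightF x S = 1 := by
    have := weight_eq_of_interval (x := x) (S := S) (a := 0) (b := 1) (by norm_num)
      (fun s hs => ⟨⟨hs.1, le_of_lt hs.2⟩, hthresh s hs.1 hs.2⟩)
      (fun s hs => ⟨le_of_lt hs.1.1, hs.1.2⟩)
    rw [this]; norm_num
  have hw0 : ∀ T, T ≠ S → weightF x T = 0 := by
    intro T hT
    apply weight_subset_singleton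
    intro s hs
    obtain ⟨⟨h0, h1⟩, he⟩ := hs
    rcases eq_or_lt_of_le h1 with h | h
    · exact h.symm ▸ rfl
    · exact absurd ((hthresh s h0 h).symm.trans he).symm hT
  rw [Finset.sum_eq_single S]
  · rw [hwS, EReal.coe_one, one_mul]
  · intro T _ hT
    rw [hw0 T hT, EReal.coe_zero, zero_mul]
  · intro h
    exact absurd (Finset.mem_univ S) h

lemma lovasz_pair (f : Finset (Fin n) → EReal) (S T : Finset (Fin n)) (hST : S ≠ T) :
    ∑ U : Finset (Fin n),
        ((weightF (fun i => (1/2:ℝ) * (if i ∈ S then (1:ℝ) else 0)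
            + (1 - (1/2:ℝ)) * (if i ∈ T then (1:ℝ) else 0)) U : ℝ) : EReal) * f U
      = (((1/2:ℝ)) : EReal) * f (S ∪ T) + (((1/2:ℝ)) : EReal) * f (S ∩ T) := by
  classical
  set z : Fin n → ℝ := fun i => (1/2:ℝ) * (if i ∈ S then (1:ℝ) else 0)
      + (1 - (1/2:ℝ)) * (if i ∈ T then (1:ℝ) else 0) with hz
  have hUI : S ∪ T ≠ S ∩ T := by
    intro h
    apply hST
    apply Finset.Subset.antisymm
    · intro a ha
      exact (Finset.mem_inter.mp (h ▸ Finset.mem_union_left T ha)).2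
    · intro a ha
      exact (Finset.mem_inter.mp (h ▸ Finset.mem_union_right S ha)).1
  have hUne : S ∪ T ≠ ∅ := by
    intro h
    apply hST
    rw [Finset.union_eq_empty] at h
    rw [h.1, h.2]
  have hthresh_lo : ∀ s : ℝ, 0 < s → s < 1/2 → threshF z s = S ∪ T := by
    intro s h0 h2
    ext i
    simp only [threshF, Finset.mem_filter, Finset.mem_univ, true_and, Finset.mem_union, hz]
    by_cases h1 : i ∈ S <;> by_cases h3 : i ∈ T <;> simp [h1, h3] <;> linarith
  have hthresh_hi : ∀ s : ℝ, 1/2 ≤ s → s < 1 → threshF z s = S ∩ T := by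
    intro s h0 h2
    ext i
    simp only [threshF, Finset.mem_filter, Finset.mem_univ, true_and, Finset.mem_inter, hz]
    by_cases h1 : i ∈ S <;> by_cases h3 : i ∈ T <;> simp [h1, h3] <;> linarith
  have hthresh_one : threshF z 1 = ∅ := by
    ext i
    simp only [threshF, Finset.mem_filter, Finset.mem_univ, true_and, Finset.notMem_empty,
      iff_false, not_lt, hz]
    by_cases h1 : i ∈ S <;> by_cases h3 : i ∈ T <;> simp [h1, h3] <;> linarith
  have hwU : weightF z (S ∪ T) = 1/2 := by
    have := weight_eq_of_interval (x := z) (S := S ∪ T) (a := 0) (b := 1/2) (by norm_num)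
      (fun s hs => ⟨⟨hs.1, by linarith [hs.2]⟩, hthresh_lo s hs.1 hs.2⟩) ?h2
    · rw [this]; norm_num
    case h2 =>
      intro s hs
      obtain ⟨⟨h0, h1⟩, he⟩ := hs
      refine ⟨le_of_lt h0, ?_⟩
      by_contra hc
      push_neg at hc
      rcases eq_or_lt_of_le h1 with h | h
      · rw [h, hthresh_one] at he
        exact hUne he.symm
      · rw [hthresh_hi s (le_of_lt hc) h] at he
        exact hUI he.symm
  have hwI : weightF z (S ∩ T) = 1/2 := by
    have := weight_eq_of_interval (x := z) (S := S ∩ T) (a := 1/2) (b := 1) (by norm_num)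
      (fun s hs => ⟨⟨by linarith [hs.1], le_of_lt hs.2⟩, hthresh_hi s (le_of_lt hs.1) hs.2⟩) ?h2
    · rw [this]; norm_num
    case h2 =>
      intro s hs
      obtain ⟨⟨h0, h1⟩, he⟩ := hs
      refine ⟨?_, h1⟩
      by_contra hc
      push_neg at hc
      rw [hthresh_lo s h0 hc] at he
      exact hUI he
  have hw0 : ∀ U, U ≠ S ∪ T → U ≠ S ∩ T → weightF z U = 0 := by
    intro U hU1 hU2
    apply weight_subset_singleton
    intro s hs
    obtain ⟨⟨h0, h1⟩, he⟩ := hs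
    rcases lt_or_ge s (1/2) with h | h
    · exact absurd ((hthresh_lo s h0 h).symm.trans he).symm hU1
    · rcases eq_or_lt_of_le h1 with hh | hh
      · exact hh.symm ▸ rfl
      · exact absurd ((hthresh_hi s h hh).symm.trans he).symm hU2
  have hsplit : ∑ U : Finset (Fin n), ((weightF z U : ℝ) : EReal) * f U
      = ∑ U ∈ ({S ∪ T, S ∩ T} : Finset (Finset (Fin n))), ((weightF z U : ℝ) : EReal) * f U := by
    symm
    apply Finset.sum_subset (Finset.subset_univ _)
    intro U _ hU
    simp only [Finset.mem_insert, Finset.mem_singleton] at hU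
    push_neg at hU
    rw [hw0 U hU.1 hU.2, EReal.coe_zero, zero_mul]
  rw [hsplit, Finset.sum_pair hUI, hwU, hwI]

end Stmt10Aux

theorem stmt10 {n : ℕ} (prec : Fin n → Fin n → Prop) (hprec : Transitive prec)
    (f : Finset (Fin n) → EReal) (hf : ∀ S, f S ≠ ⊥) :
    (∀ S T : Finset (Fin n), IsDownSet prec S → IsDownSet prec T →
      f (S ∩ T) + f (S ∪ T) ≤ f S + f T) ↔
    (∀ x y : Fin n → ℝ, InOrderPolytope prec x → InOrderPolytope prec y →
      ∀ t : ℝ, 0 ≤ t → t ≤ 1 →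
        lovaszF f (fun i => t * x i + (1 - t) * y i) ≤
          ((t : ℝ) : EReal) * lovaszF f x + (((1 - t : ℝ)) : EReal) * lovaszF f y) := by
  classical
  constructor
  · -- submodular implies convex
    intro hsub x y hx hy t ht0 ht1
    rcases eq_or_lt_of_le ht0 with h0 | h0
    · have hzy : (fun i => t * x i + (1 - t) * y i) = y := by
        funext i; rw [← h0]; ring
      rw [hzy, ← h0]
      rw [show ((0:ℝ):EReal) = 0 from EReal.coe_zero, zero_mul,
        show ((1 - 0 : ℝ):EReal) = 1 by norm_num, one_mul, zero_add]
    rcases eq_or_lt_of_le ht1 with h1 | h1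
    · have hzx : (fun i => t * x i + (1 - t) * y i) = x := by
        funext i; rw [h1]; ring
      rw [hzx, h1]
      rw [show ((1:ℝ):EReal) = 1 from EReal.coe_one, one_mul,
        show ((1 - 1 : ℝ):EReal) = 0 by norm_num, zero_mul, add_zero]
    -- now 0 < t < 1
    simp only [lovaszF]
    by_cases hlx : ∑ S : Finset (Fin n), ((weightF x S : ℝ) : EReal) * f S = ⊤
    · rw [hlx, EReal.mul_top_of_pos (EReal.coe_pos.mpr h0), EReal.top_add_of_ne_bot
        (Stmt10Aux.coe_mul_ne_bot_ereal (by linarith) (Stmt10Aux.lovasz_ne_bot f hf y))]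
      exact le_top
    by_cases hly : ∑ S : Finset (Fin n), ((weightF y S : ℝ) : EReal) * f S = ⊤
    · rw [hly, EReal.mul_top_of_pos (EReal.coe_pos.mpr (by linarith : (0:ℝ) < 1 - t)),
        EReal.add_top_of_ne_bot
          (Stmt10Aux.coe_mul_ne_bot_ereal (le_of_lt h0) (Stmt10Aux.lovasz_ne_bot f hf x))]
      exact le_top
    -- main case
    set z : Fin n → ℝ := fun i => t * x i + (1 - t) * y i with hzdef
    have hzbd : ∀ i, 0 ≤ z i ∧ z i ≤ 1 := by
      intro i
      obtain ⟨a1, a2⟩ := hx.1 i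
      obtain ⟨b1, b2⟩ := hy.1 i
      constructor
      · have := mul_nonneg (le_of_lt h0) a1
        have := mul_nonneg (by linarith : (0:ℝ) ≤ 1 - t) b1
        simp only [hzdef]; linarith
      · have := mul_le_mul_of_nonneg_left a2 (le_of_lt h0)
        have := mul_le_mul_of_nonneg_left b2 (by linarith : (0:ℝ) ≤ 1 - t)
        simp only [hzdef]; linarith
    have hfx : ∀ S, 0 < weightF x S → f S ≠ ⊤ := by
      intro S hw htop
      exact hlx (Stmt10Aux.lovasz_top_of f hf x hw htop)
    have hfy : ∀ S, 0 < weightF y S → f S ≠ ⊤ := by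
      intro S hw htop
      exact hly (Stmt10Aux.lovasz_top_of f hf y hw htop)
    have hdown : ∀ (u : Fin n → ℝ), (∀ i j, prec i j → u j ≤ u i) →
        ∀ S, 0 < weightF u S → IsDownSet prec S := by
      intro u hord S hw
      obtain ⟨t₀, _, hte⟩ := Stmt10Aux.pos_weight_exists hw
      intro i j hij hj
      rw [← hte] at hj ⊢
      simp only [threshF, Finset.mem_filter, Finset.mem_univ, true_and] at hj ⊢
      exact lt_of_lt_of_le hj (hord i j hij)
    set P : Finset (Fin n) → Prop := fun S => IsDownSet prec S ∧ f S ≠ ⊤ with hPdef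
    have hPx : ∀ S, 0 < weightF x S → P S := fun S hw => ⟨hdown x hx.2 S hw, hfx S hw⟩
    have hPy : ∀ S, 0 < weightF y S → P S := fun S hw => ⟨hdown y hy.2 S hw, hfy S hw⟩
    have hPcl : ∀ S T, P S → P T → P (S ∩ T) ∧ P (S ∪ T) := by
      intro S T hS hT
      have hdI : IsDownSet prec (S ∩ T) := by
        intro i j hij hj
        rw [Finset.mem_inter] at hj ⊢
        exact ⟨hS.1 i j hij hj.1, hT.1 i j hij hj.2⟩
      have hdU : IsDownSet prec (S ∪ T) := by
        intro i j hij hj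
        rw [Finset.mem_union] at hj ⊢
        rcases hj with hj | hj
        · exact Or.inl (hS.1 i j hij hj)
        · exact Or.inr (hT.1 i j hij hj)
      have hle := hsub S T hS.1 hT.1
      have hsum_ne : f S + f T ≠ ⊤ := (EReal.add_lt_top hS.2 hT.2).ne
      have hIne : f (S ∩ T) ≠ ⊤ := by
        intro htop
        rw [htop, EReal.top_add_of_ne_bot (hf _)] at hle
        exact hsum_ne (top_le_iff.mp hle)
      have hUne : f (S ∪ T) ≠ ⊤ := by
        intro htop
        rw [htop, EReal.add_top_of_ne_bot (hf _)] at hle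
        exact hsum_ne (top_le_iff.mp hle)
      exact ⟨⟨hdI, hIne⟩, ⟨hdU, hUne⟩⟩
    have hzord : ∀ i j, prec i j → z j ≤ z i := by
      intro i j hij
      have := hx.2 i j hij
      have := hy.2 i j hij
      simp only [hzdef]
      have h1t : (0:ℝ) ≤ 1 - t := by linarith
      nlinarith
    -- P holds for positive-weight sets of z
    have hPz : ∀ S, 0 < weightF z S → P S := by
      intro S hw
      refine ⟨hdown z hzord S hw, ?_⟩
      obtain ⟨t₀, ht₀m, hte⟩ := Stmt10Aux.pos_weight_exists hw
      rcases Finset.eq_empty_or_nonempty S with hSe | hSne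
      · subst hSe
        rcases Nat.eq_zero_or_pos n with hn | hn
        · -- n = 0
          subst hn
          have hthr : ∀ s : ℝ, threshF x s = (∅ : Finset (Fin 0)) :=
            fun s => Finset.eq_empty_of_isEmpty _
          have : 0 < weightF x (∅ : Finset (Fin 0)) := by
            apply Stmt10Aux.weight_ge_interval (a := 0) (b := 1) (by norm_num)
            intro s hs
            exact ⟨⟨hs.1, le_of_lt hs.2⟩, hthr s⟩
          exact (hPx ∅ this).2
        · -- n ≥ 1
          have hex : ∃ t₁, (t₁ ∈ Set.Ioc (0:ℝ) 1 ∧ threshF z t₁ = ∅) ∧ t₁ < 1 := by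
            by_contra hc
            push_neg at hc
            have : {s : ℝ | s ∈ Set.Ioc (0:ℝ) 1 ∧ threshF z s = ∅} ⊆ {1} := by
              intro s hs
              have := hc s hs
              have : s = 1 := le_antisymm hs.1.2 this
              exact this ▸ rfl
            rw [Stmt10Aux.weight_subset_singleton this] at hw
            exact lt_irrefl 0 hw
          obtain ⟨t₁, ⟨_, ht₁e⟩, ht₁lt⟩ := hex
          have hzlt : ∀ i, z i < 1 := by
            intro i
            have hni : i ∉ threshF z t₁ := by rw [ht₁e]; exact Finset.notMem_empty i
            simp only [threshF, Finset.mem_filter, Finset.mem_univ, true_and, not_lt] at hni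
            linarith
          have hEex : ∀ i : Fin n, ∃ E : Finset (Fin n), P E ∧ i ∉ E := by
            intro i
            by_cases hxi : x i < 1
            · refine ⟨Finset.univ.filter (fun j => x i < x j), 
                hPx _ (Stmt10Aux.weight_gt_pos hx.1 i hxi), ?_⟩
              simp
            · have hxi1 : x i = 1 := le_antisymm (hx.1 i).2 (not_lt.mp hxi)
              have hyi : y i < 1 := by
                have := hzlt i
                simp only [hzdef] at this
                rw [hxi1] at this
                nlinarith
              refine ⟨Finset.univ.filter (fun j => y i < y j),
                hPy _ (Stmt10Aux.weight_gt_pos hy.1 i hyi), ?_⟩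
              simp
          choose E hPE hiE using hEex
          have hmem_inf : ∀ (s : Finset (Fin n)) (hs : s.Nonempty) (j : Fin n),
              j ∈ s.inf' hs E ↔ ∀ i ∈ s, j ∈ E i := by
            intro s hs
            induction hs using Finset.Nonempty.cons_induction with
            | singleton a => intro j; simp [Finset.inf'_singleton]
            | cons a s ha hs ih =>
              intro j
              rw [Finset.inf'_cons hs]
              simp only [Finset.mem_cons]
              constructor
              · intro h
                have h' := Finset.mem_inter.mp (by exact h)
                intro i hi
                rcases hi with hi | hi
                · exact hi ▸ h'.1
                · exact (ih j).mp h'.2 i hi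
              · intro h
                apply Finset.mem_inter.mpr
                exact ⟨h a (Or.inl rfl), (ih j).mpr (fun i hi => h i (Or.inr hi))⟩
          have hP_inf : ∀ (s : Finset (Fin n)) (hs : s.Nonempty), P (s.inf' hs E) := by
            intro s hs
            induction hs using Finset.Nonempty.cons_induction with
            | singleton a => rw [Finset.inf'_singleton]; exact hPE a
            | cons a s ha hs ih =>
              rw [Finset.inf'_cons hs]
              exact (hPcl _ _ (hPE a) ih).1
          have huniv_ne : (Finset.univ : Finset (Fin n)).Nonempty :=
            ⟨⟨0, hn⟩, Finset.mem_univ _⟩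
          have hempty : Finset.univ.inf' huniv_ne E = (∅ : Finset (Fin n)) := by
            rw [Finset.eq_empty_iff_forall_notMem]
            intro j hj
            exact hiE j ((hmem_inf _ huniv_ne j).mp hj j (Finset.mem_univ j))
          have := hP_inf Finset.univ huniv_ne
          rw [hempty] at this
          exact this.2
      · -- S nonempty
        set A : Fin n → Finset (Fin n) :=
          fun i => Finset.univ.filter (fun j => x i ≤ x j ∧ y i ≤ y j) with hA
        have hzi_mem : ∀ i ∈ S, t₀ < z i := by
          intro i hi
          rw [← hte] at hi
          simpa only [threshF, Finset.mem_filter, Finset.mem_univ, true_and] using hi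
        have hPA : ∀ i ∈ S, P (A i) := by
          intro i hiS
          have hzi : 0 < z i := lt_trans ht₀m.1 (hzi_mem i hiS)
          by_cases hxi : x i = 0
          · have hyi : 0 < y i := by
              simp only [hzdef] at hzi
              rw [hxi] at hzi
              nlinarith
            have hEq : A i = Finset.univ.filter (fun j => y i ≤ y j) := by
              simp only [hA]
              ext j
              simp only [Finset.mem_filter, Finset.mem_univ, true_and]
              constructor
              · exact fun h => h.2
              · exact fun h => ⟨hxi ▸ (hx.1 j).1, h⟩
            rw [hEq]
            exact hPy _ (Stmt10Aux.weight_ge_pos hy.1 i hyi)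
          · have hxi' : 0 < x i := lt_of_le_of_ne (hx.1 i).1 (Ne.symm hxi)
            by_cases hyi : y i = 0
            · have hEq : A i = Finset.univ.filter (fun j => x i ≤ x j) := by
                simp only [hA]
                ext j
                simp only [Finset.mem_filter, Finset.mem_univ, true_and]
                constructor
                · exact fun h => h.1
                · exact fun h => ⟨h, hyi ▸ (hy.1 j).1⟩
              rw [hEq]
              exact hPx _ (Stmt10Aux.weight_ge_pos hx.1 i hxi')
            · have hyi' : 0 < y i := lt_of_le_of_ne (hy.1 i).1 (Ne.symm hyi)
              have hEq : A i = (Finset.univ.filter (fun j => x i ≤ x j))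
                  ∩ (Finset.univ.filter (fun j => y i ≤ y j)) := by
                simp only [hA]
                ext j
                simp only [Finset.mem_filter, Finset.mem_inter, Finset.mem_univ, true_and]
              rw [hEq]
              exact (hPcl _ _ (hPx _ (Stmt10Aux.weight_ge_pos hx.1 i hxi'))
                (hPy _ (Stmt10Aux.weight_ge_pos hy.1 i hyi'))).1
        have hAsub : ∀ i ∈ S, A i ⊆ S := by
          intro i hiS j hj
          simp only [hA, Finset.mem_filter, Finset.mem_univ, true_and] at hj
          have hzij : z i ≤ z j := by
            simp only [hzdef]
            have h1 := mul_le_mul_of_nonneg_left hj.1 (le_of_lt h0)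
            have h2 := mul_le_mul_of_nonneg_left hj.2 (by linarith : (0:ℝ) ≤ 1 - t)
            linarith
          rw [← hte]
          simp only [threshF, Finset.mem_filter, Finset.mem_univ, true_and]
          exact lt_of_lt_of_le (hzi_mem i hiS) hzij
        have hAi : ∀ i, i ∈ A i := by
          intro i
          simp [hA]
        have hmem_sup : ∀ (s : Finset (Fin n)) (hs : s.Nonempty) (j : Fin n),
            j ∈ s.sup' hs A ↔ ∃ i ∈ s, j ∈ A i := by
          intro s hs
          induction hs using Finset.Nonempty.cons_induction with
          | singleton a => intro j; simp [Finset.sup'_singleton]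
          | cons a s ha hs ih =>
            intro j
            rw [Finset.sup'_cons hs]
            simp only [Finset.mem_cons]
            constructor
            · intro h
              rcases Finset.mem_union.mp (by exact h) with h | h
              · exact ⟨a, Or.inl rfl, h⟩
              · obtain ⟨i, hi, hji⟩ := (ih j).mp h
                exact ⟨i, Or.inr hi, hji⟩
            · rintro ⟨i, hi | hi, hji⟩
              · exact Finset.mem_union.mpr (Or.inl (hi ▸ hji))
              · exact Finset.mem_union.mpr (Or.inr ((ih j).mpr ⟨i, hi, hji⟩))
        have hP_sup : ∀ (s : Finset (Fin n)) (hs : s.Nonempty), (∀ i ∈ s, P (A i)) →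
            P (s.sup' hs A) := by
          intro s hs
          induction hs using Finset.Nonempty.cons_induction with
          | singleton a =>
            intro h
            rw [Finset.sup'_singleton]
            exact h a (Finset.mem_singleton_self a)
          | cons a s ha hs ih =>
            intro h
            rw [Finset.sup'_cons hs]
            exact (hPcl _ _ (h a (Finset.mem_cons_self a s))
              (ih (fun i hi => h i (Finset.mem_cons_of_mem hi)))).2
        have hSeq : S.sup' hSne A = S := by
          apply Finset.Subset.antisymm
          · intro j hj
            obtain ⟨i, hi, hji⟩ := (hmem_sup S hSne j).mp hj
            exact hAsub i hi hji
          · intro j hj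
            exact (hmem_sup S hSne j).mpr ⟨j, hj, hAi j⟩
        have := hP_sup S hSne hPA
        rw [hSeq] at this
        exact this.2
    -- build submodular extension
    set Lfin : Finset (Finset (Fin n)) := Finset.univ.filter P with hLdef
    have hLmem : ∀ S, S ∈ Lfin ↔ P S := by
      intro S
      simp [hLdef]
    have hxw : ∃ S, 0 < weightF x S := by
      by_contra hc
      push_neg at hc
      have h0' : ∀ S : Finset (Fin n), weightF x S = 0 :=
        fun S => le_antisymm (hc S) (Stmt10Aux.weight_nonneg x S)
      have hone := Stmt10Aux.sum_weight_eq_one x hx.1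
      rw [Finset.sum_congr rfl (fun S _ => h0' S)] at hone
      simp at hone
    obtain ⟨S₀, hS₀⟩ := hxw
    have hLne : Lfin.Nonempty := ⟨S₀, (hLmem S₀).mpr (hPx S₀ hS₀)⟩
    have hLcl : ∀ A' ∈ Lfin, ∀ B' ∈ Lfin, A' ∩ B' ∈ Lfin ∧ A' ∪ B' ∈ Lfin := by
      intro A' hA' B' hB'
      obtain ⟨h1, h2⟩ := hPcl A' B' ((hLmem A').mp hA') ((hLmem B').mp hB')
      exact ⟨(hLmem _).mpr h1, (hLmem _).mpr h2⟩
    have hLsub : ∀ A' ∈ Lfin, ∀ B' ∈ Lfin,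
        (f (A' ∩ B')).toReal + (f (A' ∪ B')).toReal ≤ (f A').toReal + (f B').toReal := by
      intro A' hA' B' hB'
      have hPA' := (hLmem A').mp hA'
      have hPB' := (hLmem B').mp hB'
      obtain ⟨hPI, hPU⟩ := hPcl A' B' hPA' hPB'
      have hle := hsub A' B' hPA'.1 hPB'.1
      have hIb := hf (A' ∩ B')
      have hUb := hf (A' ∪ B')
      have h1 : (f (A' ∩ B') + f (A' ∪ B')).toReal
          = (f (A' ∩ B')).toReal + (f (A' ∪ B')).toReal :=
        EReal.toReal_add hPI.2 hIb hPU.2 hUb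
      have h2 : (f A' + f B').toReal = (f A').toReal + (f B').toReal :=
        EReal.toReal_add hPA'.2 (hf A') hPB'.2 (hf B')
      rw [← h1, ← h2]
      apply EReal.toReal_le_toReal hle
      · intro hbot
        rcases EReal.add_eq_bot_iff.mp hbot with h | h
        · exact hIb h
        · exact hUb h
      · exact (EReal.add_lt_top hPA'.2 hPB'.2).ne
    obtain ⟨gex, hgsub, hgeq⟩ := Stmt10Aux.exists_extension Lfin hLne hLcl
      (fun T => (f T).toReal) hLsub
    -- bridge to real sums
    have hbridge : ∀ (u : Fin n → ℝ), (∀ S, 0 < weightF u S → P S) →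
        ∑ S : Finset (Fin n), ((weightF u S : ℝ) : EReal) * f S
          = ((∑ S : Finset (Fin n), weightF u S * gex S : ℝ) : EReal) := by
      intro u hPu
      apply Stmt10Aux.lovasz_eq_coe
      intro S hw
      have hPS := hPu S hw
      rw [hgeq S ((hLmem S).mpr hPS)]
      exact EReal.coe_toReal hPS.2 (hf S)
    rw [hbridge z hPz, hbridge x hPx, hbridge y hPy, ← EReal.coe_mul, ← EReal.coe_mul,
      ← EReal.coe_add, EReal.coe_le_coe_iff]
    exact Stmt10Aux.core_convex gex hgsub x y hx.1 hy.1 t ht0 ht1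
  · -- convex implies submodular
    intro hconv S T hS hT
    by_cases hST : S = T
    · subst hST
      rw [Finset.inter_self, Finset.union_self]
    · have hxP : InOrderPolytope prec (fun i => if i ∈ S then (1:ℝ) else 0) := by
        constructor
        · intro i
          by_cases hi : i ∈ S <;> simp [hi]
        · intro i j hij
          beta_reduce
          by_cases hj : j ∈ S
          · rw [if_pos hj, if_pos (hS i j hij hj)]
          · rw [if_neg hj]
            by_cases hi : i ∈ S <;> simp [hi]
      have hyP : InOrderPolytope prec (fun i => if i ∈ T then (1:ℝ) else 0) := by
        constructor
        · intro i
          by_cases hi : i ∈ T <;> simp [hi]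
        · intro i j hij
          beta_reduce
          by_cases hj : j ∈ T
          · rw [if_pos hj, if_pos (hT i j hij hj)]
          · rw [if_neg hj]
            by_cases hi : i ∈ T <;> simp [hi]
      have hkey := hconv _ _ hxP hyP (1/2 : ℝ) (by norm_num) (by norm_num)
      simp only [lovaszF] at hkey
      rw [Stmt10Aux.lovasz_pair f S T hST, Stmt10Aux.lovasz_indicator f S,
        Stmt10Aux.lovasz_indicator f T] at hkey
      -- hkey : (1/2) f(S∪T) + (1/2) f(S∩T) ≤ (1/2) f S + (1-1/2) f T
      have hhalf : ((1 - (1/2 : ℝ) : ℝ) : EReal) = (((1/2 : ℝ)) : EReal) := by norm_num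
      rw [hhalf] at hkey
      by_cases hfS : f S = ⊤
      · rw [hfS, EReal.top_add_of_ne_bot (hf T)]
        exact le_top
      by_cases hfT : f T = ⊤
      · rw [hfT, EReal.add_top_of_ne_bot (hf S)]
        exact le_top
      have hfU : f (S ∪ T) ≠ ⊤ := by
        intro htop
        rw [htop, EReal.mul_top_of_pos (EReal.coe_pos.mpr (by norm_num : (0:ℝ) < 1/2)),
          EReal.top_add_of_ne_bot (Stmt10Aux.coe_mul_ne_bot_ereal (by norm_num) (hf _))] at hkey
        have h1 := top_le_iff.mp hkey
        rw [← EReal.coe_toReal hfS (hf S), ← EReal.coe_toReal hfT (hf T),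
          ← EReal.coe_mul, ← EReal.coe_mul, ← EReal.coe_add] at h1
        exact EReal.coe_ne_top _ h1
      have hfI : f (S ∩ T) ≠ ⊤ := by
        intro htop
        rw [htop, EReal.mul_top_of_pos (EReal.coe_pos.mpr (by norm_num : (0:ℝ) < 1/2)),
          EReal.add_top_of_ne_bot (Stmt10Aux.coe_mul_ne_bot_ereal (by norm_num) (hf _))] at hkey
        have h1 := top_le_iff.mp hkey
        rw [← EReal.coe_toReal hfS (hf S), ← EReal.coe_toReal hfT (hf T),
          ← EReal.coe_mul, ← EReal.coe_mul, ← EReal.coe_add] at h1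
        exact EReal.coe_ne_top _ h1
      rw [← EReal.coe_toReal hfS (hf S), ← EReal.coe_toReal hfT (hf T),
        ← EReal.coe_toReal hfU (hf _), ← EReal.coe_toReal hfI (hf _)] at hkey ⊢
      rw [← EReal.coe_mul, ← EReal.coe_mul, ← EReal.coe_mul, ← EReal.coe_mul,
        ← EReal.coe_add, ← EReal.coe_add, EReal.coe_le_coe_iff] at hkey
      rw [← EReal.coe_add, ← EReal.coe_add, EReal.coe_le_coe_iff]
      linarith
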